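/- Let (λ_j)_{j≥1} be a summable sequence of nonnegative real numbers that is not identically zero, and let A > 0. Then the equation Σ_{j=1}^∞ min{λ_j, ε²} = A · ε⁴ has exactly one solution ε > 0. -/

import Mathlib

open Real Filter

/-- Distinct eigenvalues (up to constants) of the NTK on the sphere `S^d`:
`ν_d(k) = d^d · k^(k−2) · (k+d)^(−(k+d+1)) · (k² + k·d + d)`. -/
noncomputable def nuNT (d k : ℕ) : ℝ :=
  (d : ℝ) ^ (d : ℝ) * (k : ℝ) ^ ((k : ℝ) - 2) *
    ((k : ℝ) + (d : ℝ)) ^ (-((k : ℝ) + (d : ℝ) + 1)) *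
    ((k : ℝ) ^ 2 + (k : ℝ) * (d : ℝ) + (d : ℝ))

/-- Dimension of the space of spherical harmonics of degree `k` on `S^d ⊆ ℝ^(d+1)`. -/
def Nsph (d k : ℕ) : ℕ :=
  if k = 0 then 1
  else (k + d).choose k - (if 2 ≤ k then (k + d - 2).choose (k - 2) else 0)

/-- `λ_d(0) = 1` and `λ_d(k) = ν_d(k)` for `k ≥ 1`. -/
noncomputable def lamNT (d k : ℕ) : ℝ := if k = 0 then 1 else nuNT d k

lemma mend_key_aux {a b : ℝ} (ha : 0 < a) (hab : a < b) :
    a ^ 4 * b ^ 2 ≤ b ^ 4 * a ^ 2 := by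
  have h2 : a ^ 2 ≤ b ^ 2 := by nlinarith
  calc a ^ 4 * b ^ 2 = a ^ 2 * (a ^ 2 * b ^ 2) := by ring
    _ ≤ b ^ 2 * (a ^ 2 * b ^ 2) := mul_le_mul_of_nonneg_right h2 (by positivity)
    _ = b ^ 4 * a ^ 2 := by ring

lemma mend_key_aux' {a b : ℝ} (ha : 0 < a) (hab : a < b) :
    a ^ 4 * b ^ 2 < b ^ 4 * a ^ 2 := by
  have hb : 0 < b := ha.trans hab
  have h2 : a ^ 2 < b ^ 2 := by nlinarith
  calc a ^ 4 * b ^ 2 = a ^ 2 * (a ^ 2 * b ^ 2) := by ring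
    _ < b ^ 2 * (a ^ 2 * b ^ 2) := mul_lt_mul_of_pos_right h2 (by positivity)
    _ = b ^ 4 * a ^ 2 := by ring

lemma mend_pow4 {a b : ℝ} (ha : 0 < a) (hab : a < b) : a ^ 4 < b ^ 4 :=
  pow_lt_pow_left₀ hab ha.le (by norm_num)

lemma mend_key {l a b : ℝ} (hl : 0 ≤ l) (ha : 0 < a) (hab : a < b) :
    a ^ 4 * min l (b ^ 2) ≤ b ^ 4 * min l (a ^ 2) := by
  have hb : 0 < b := ha.trans hab
  rw [mul_min_of_nonneg _ _ (by positivity), mul_min_of_nonneg _ _ (by positivity)]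
  exact min_le_min (mul_le_mul_of_nonneg_right (mend_pow4 ha hab).le hl)
    (mend_key_aux ha hab)

lemma mend_key_strict {l a b : ℝ} (hl : 0 < l) (ha : 0 < a) (hab : a < b) :
    a ^ 4 * min l (b ^ 2) < b ^ 4 * min l (a ^ 2) := by
  have hb : 0 < b := ha.trans hab
  rw [mul_min_of_nonneg _ _ (by positivity), mul_min_of_nonneg _ _ (by positivity)]
  refine lt_min ?_ ?_
  · exact (min_le_left _ _).trans_lt (mul_lt_mul_of_pos_right (mend_pow4 ha hab) hl)
  · exact (min_le_right _ _).trans_lt (mend_key_aux' ha hab)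

theorem exists_unique_mendelson_solution (lam : ℕ → ℝ) (hnonneg : ∀ j, 0 ≤ lam j)
    (hsum : Summable lam) (hne : ∃ j, lam j ≠ 0) (A : ℝ) (hA : 0 < A) :
    ∃! ε : ℝ, 0 < ε ∧ (∑' j : ℕ, min (lam j) (ε ^ 2)) = A * ε ^ 4 := by
  obtain ⟨j0, hj0⟩ := hne
  have hj0' : 0 < lam j0 := (hnonneg j0).lt_of_ne (Ne.symm hj0)
  have hsummin : ∀ c : ℝ, Summable (fun j => min (lam j) (c ^ 2)) := fun c =>
    hsum.of_nonneg_of_le (fun j => le_min (hnonneg j) (sq_nonneg c)) (fun j => min_le_left _ _)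
  set S : ℝ → ℝ := fun ε => ∑' j, min (lam j) (ε ^ 2) with hSdef
  -- uniqueness engine
  have huniq : ∀ x y : ℝ, 0 < x → x < y →
      S x = A * x ^ 4 → S y = A * y ^ 4 → False := by
    intro x y hx hxy hSx hSy
    have hSx' : (∑' j, min (lam j) (x ^ 2)) = A * x ^ 4 := hSx
    have hSy' : (∑' j, min (lam j) (y ^ 2)) = A * y ^ 4 := hSy
    have hlt : (∑' j, x ^ 4 * min (lam j) (y ^ 2)) < ∑' j, y ^ 4 * min (lam j) (x ^ 2) := by
      refine Summable.tsum_lt_tsum (i := j0) (fun j => mend_key (hnonneg j) hx hxy)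
        (mend_key_strict hj0' hx hxy) ((hsummin y).mul_left _) ((hsummin x).mul_left _)
    rw [tsum_mul_left, tsum_mul_left, hSx', hSy'] at hlt
    have heq : x ^ 4 * (A * y ^ 4) = y ^ 4 * (A * x ^ 4) := by ring
    linarith
  -- continuity
  have hScont : Continuous S := by
    refine continuous_tsum (u := lam) (fun j => continuous_const.min (continuous_pow 2)) hsum ?_
    intro j x
    rw [Real.norm_eq_abs, abs_of_nonneg (le_min (hnonneg j) (sq_nonneg x))]
    exact min_le_left _ _
  -- lower point a
  set a : ℝ := min (Real.sqrt (lam j0)) (Real.sqrt (1 / (2 * A))) with ha_def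
  have ha : 0 < a := lt_min (Real.sqrt_pos.2 hj0') (Real.sqrt_pos.2 (by positivity))
  have ha1 : a ^ 2 ≤ lam j0 := by
    calc a ^ 2 ≤ Real.sqrt (lam j0) ^ 2 :=
          pow_le_pow_left₀ ha.le (min_le_left _ _) 2
      _ = lam j0 := Real.sq_sqrt hj0'.le
  have ha2 : a ^ 2 ≤ 1 / (2 * A) := by
    calc a ^ 2 ≤ Real.sqrt (1 / (2 * A)) ^ 2 :=
          pow_le_pow_left₀ ha.le (min_le_right _ _) 2
      _ = 1 / (2 * A) := Real.sq_sqrt (by positivity)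
  have hfa : A * a ^ 4 < S a := by
    have h1 : a ^ 2 ≤ S a := by
      have := Summable.le_tsum (hsummin a) j0 (fun b _ => le_min (hnonneg b) (sq_nonneg a))
      rwa [min_eq_right ha1] at this
    have h2 : A * a ^ 4 < a ^ 2 := by
      have h3 : A * a ^ 2 ≤ 1 / 2 := by
        have h4 := mul_le_mul_of_nonneg_left ha2 hA.le
        have h5 : A * (1 / (2 * A)) = 1 / 2 := by field_simp
        linarith
      nlinarith [mul_le_mul_of_nonneg_right h3 (sq_nonneg a), mul_pos ha ha]
    linarith
  -- upper point b
  set T : ℝ := ∑' j, lam j with hT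
  have hT0 : 0 < T := hj0'.trans_le (Summable.le_tsum hsum j0 (fun b _ => hnonneg b))
  have hTA : 0 < T / A := div_pos hT0 hA
  set b : ℝ := a + Real.sqrt (Real.sqrt (T / A)) with hb_def
  have hsq : 0 < Real.sqrt (Real.sqrt (T / A)) :=
    Real.sqrt_pos.2 (Real.sqrt_pos.2 hTA)
  have hab : a < b := by
    rw [hb_def]; linarith
  have hb4 : T < A * b ^ 4 := by
    have h1 : Real.sqrt (Real.sqrt (T / A)) ^ 2 = Real.sqrt (T / A) :=
      Real.sq_sqrt (Real.sqrt_nonneg _)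
    have h2 : Real.sqrt (T / A) ^ 2 = T / A := Real.sq_sqrt hTA.le
    have hlt : Real.sqrt (Real.sqrt (T / A)) < b := by rw [hb_def]; linarith
    have h3 : Real.sqrt (T / A) < b ^ 2 := by nlinarith [hsq]
    have h4 : T / A < b ^ 4 := by nlinarith [Real.sqrt_nonneg (T / A)]
    calc T = A * (T / A) := by field_simp
      _ < A * b ^ 4 := by nlinarith
  have hfb : S b < A * b ^ 4 := by
    have : S b ≤ T := Summable.tsum_le_tsum (fun j => min_le_left _ _) (hsummin b) hsum
    linarith
  -- IVT
  have hmem : (0 : ℝ) ∈ Set.Icc (S b - A * b ^ 4) (S a - A * a ^ 4) :=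
    ⟨by linarith, by linarith⟩
  obtain ⟨x, hxmem, hxeq⟩ := intermediate_value_Icc' hab.le
    ((hScont.sub (continuous_const.mul (continuous_pow 4))).continuousOn) hmem
  have hx0 : 0 < x := ha.trans_le hxmem.1
  have hxsol : S x = A * x ^ 4 := by
    have h : S x - A * x ^ 4 = 0 := hxeq
    linarith
  refine ⟨x, ⟨hx0, hxsol⟩, ?_⟩
  rintro y ⟨hy0, hysol⟩
  rcases lt_trichotomy y x with h | h | h
  · exact absurd (huniq y x hy0 h hysol hxsol) (by simp)
  · exact h
  · exact absurd (huniq x y hx0 h hxsol hysol) (by simp)
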